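/- Let Φ_n(s) = 1 - (1 - 1/s)^n and, for X > 1, let Φ_{n,X}(s) = ∫_{-log X}^{∞} F_n(x) e^{(s-1/2)x} dx where F_n(x) = e^{x/2} ∑_{j=1}^{n} C(n,j) x^{j-1}/(j-1)! for x < 0 and 0 for x ≥ 0. Then for Re(s) > 0, Φ_n(s) - Φ_{n,X}(s) = X^{-s} ∑_{j=1}^{n} C(n,j) (-1)^{j-1} ∑_{m=0}^{j-1} (log X)^{j-m-1}/((j-m-1)!) · s^{-m-1}. -/

import Mathlib

open MeasureTheory

noncomputable def Pa (s : ℂ) (k : ℕ) (y : ℂ) : ℂ :=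
  ∑ m ∈ Finset.range (k+1),
    (-1:ℂ)^m * ((Nat.factorial k : ℂ) / (Nat.factorial (k-m) : ℂ)) * y^(k-m) / s^(m+1)

lemma Pa_zero (s : ℂ) (k : ℕ) : Pa s k 0 = (-1)^k * (Nat.factorial k : ℂ) / s^(k+1) := by
  unfold Pa
  rw [Finset.sum_eq_single k]
  · simp [Nat.sub_self, Nat.factorial_zero]
  · intro m hm hne
    have h : m < k := lt_of_le_of_ne (Nat.lt_succ_iff.mp (Finset.mem_range.mp hm)) hne
    simp [zero_pow (Nat.sub_ne_zero_of_lt h)]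
  · intro h; exact absurd (Finset.self_mem_range_succ k) h

lemma Pa_succ (s : ℂ) (hs : s ≠ 0) (k : ℕ) (y : ℂ) :
    Pa s (k+1) y = y^(k+1)/s - (((k:ℂ)+1)/s) * Pa s k y := by
  unfold Pa
  rw [Finset.sum_range_succ']
  have h0 : (-1:ℂ)^0 * ((Nat.factorial (k+1) : ℂ) / (Nat.factorial (k+1-0) : ℂ)) * y^(k+1-0) / s^(0+1)
      = y^(k+1)/s := by
    simp [div_self (by exact_mod_cast (Nat.factorial_ne_zero (k+1)) : ((Nat.factorial (k+1):ℂ)) ≠ 0)]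
  rw [h0, Finset.mul_sum]
  have h1 : ∀ m ∈ Finset.range (k+1),
      (-1:ℂ)^(m+1) * ((Nat.factorial (k+1) : ℂ) / (Nat.factorial (k+1-(m+1)) : ℂ)) * y^(k+1-(m+1)) / s^(m+1+1)
      = -((((k:ℂ)+1)/s) * ((-1:ℂ)^m * ((Nat.factorial k : ℂ) / (Nat.factorial (k-m) : ℂ)) * y^(k-m) / s^(m+1))) := by
    intro m hm
    have hkm : k+1-(m+1) = k - m := by omega
    rw [hkm]
    have hfac : ((Nat.factorial (k+1) : ℂ)) = ((k:ℂ)+1) * (Nat.factorial k : ℂ) := by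
      push_cast [Nat.factorial_succ]; ring
    have hfne : ((Nat.factorial (k-m) : ℂ)) ≠ 0 := by exact_mod_cast Nat.factorial_ne_zero (k-m)
    rw [hfac]
    field_simp
    ring
  rw [Finset.sum_congr rfl h1]
  simp
  ring

lemma hasDerivAt_expPa (s : ℂ) (hs : s ≠ 0) (k : ℕ) (x : ℝ) :
    HasDerivAt (fun y : ℝ => Complex.exp (s * y) * Pa s k y)
      ((x:ℂ)^k * Complex.exp (s * x)) x := by
  have hexp : HasDerivAt (fun y : ℝ => Complex.exp (s * y)) (Complex.exp (s * x) * s) x := by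
    have h1 : HasDerivAt (fun y : ℂ => Complex.exp (s * y)) (Complex.exp (s * x) * s) (x:ℂ) := by
      simpa using ((hasDerivAt_id (x:ℂ)).const_mul s).cexp
    exact h1.comp_ofReal
  induction k with
  | zero =>
    have hfun : (fun y : ℝ => Complex.exp (s * y) * Pa s 0 y)
        = fun y : ℝ => Complex.exp (s * y) * s⁻¹ := by
      funext y; simp [Pa]
    rw [hfun]
    have := hexp.mul_const s⁻¹
    convert this using 1
    · rfl
    · linear_combination (-(Complex.exp (s * x))) * mul_inv_cancel₀ hs
  | succ k ih =>
    have hfun : (fun y : ℝ => Complex.exp (s * y) * Pa s (k+1) y)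
        = fun y : ℝ => Complex.exp (s * y) * (y:ℂ)^(k+1) / s
            - (((k:ℂ)+1)/s) * (Complex.exp (s * y) * Pa s k y) := by
      funext y
      rw [Pa_succ s hs]
      ring
    rw [hfun]
    have hpow : HasDerivAt (fun y : ℝ => ((y:ℂ))^(k+1)) ((((k:ℕ):ℂ)+1) * (x:ℂ)^k) x := by
      have := (hasDerivAt_pow (k+1) (x:ℂ)).comp_ofReal
      simpa using this
    have h1 := ((hexp.mul hpow).div_const s)
    have h2 := ih.const_mul (((k:ℂ)+1)/s)
    have h3 := h1.sub h2
    convert h3 using 1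
    · rfl
    · rfl
    · linear_combination (-(Complex.exp (s * x) * (x:ℂ)^(k+1))) * mul_inv_cancel₀ hs

lemma cont_pow_exp (s : ℂ) (k : ℕ) :
    Continuous fun x : ℝ => (x:ℂ)^k * Complex.exp (s * x) :=
  (Complex.continuous_ofReal.pow k).mul
    (Complex.continuous_exp.comp (continuous_const.mul Complex.continuous_ofReal))

lemma integral_Ioo_pow_exp (s : ℂ) (hs : s ≠ 0) (k : ℕ) (a : ℝ) (ha : a ≤ 0) :
    ∫ x in Set.Ioo a 0, (x:ℂ)^k * Complex.exp (s * x)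
      = Pa s k 0 - Complex.exp (s * a) * Pa s k a := by
  have h := intervalIntegral.integral_eq_sub_of_hasDerivAt
    (f := fun y : ℝ => Complex.exp (s * y) * Pa s k y)
    (f' := fun x : ℝ => (x:ℂ)^k * Complex.exp (s * x))
    (a := a) (b := 0)
    (fun x _ => hasDerivAt_expPa s hs k x)
    ((cont_pow_exp s k).intervalIntegrable a 0)
  rw [intervalIntegral.integral_of_le ha, MeasureTheory.integral_Ioc_eq_integral_Ioo] at h
  rw [h]
  simp

/-- The truncated test function of the proof of Theorem 2.1. -/
noncomputable def LiFtr (n : ℕ) (x : ℝ) : ℝ :=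
  if x < 0 then
    Real.exp (x / 2) * ∑ j ∈ Finset.Icc 1 n, (n.choose j : ℝ) * x ^ (j - 1) / (Nat.factorial (j - 1) : ℝ)
  else 0

lemma sum_Icc_one (n : ℕ) (f : ℕ → ℂ) :
    ∑ j ∈ Finset.Icc 1 n, f j = ∑ i ∈ Finset.range n, f (i+1) := by
  rw [← Finset.Ico_add_one_right_eq_Icc, Finset.sum_Ico_eq_sum_range]
  exact Finset.sum_congr rfl fun i _ => by rw [Nat.add_comm]

/-- (2.4): for `Re s > 0` and `X > 1`,
`Φ_n(s) - Φ_{n,X}(s) = X^{-s} ∑_{j=1}^n C(n,j)(-1)^{j-1} ∑_{m=0}^{j-1} (log X)^{j-m-1}/(j-m-1)! · s^{-m-1}`,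
where `Φ_n(s) = 1 - (1 - 1/s)^n` and `Φ_{n,X}(s) = ∫_{-log X}^∞ F_n(x) e^{(s-1/2)x} dx`. -/
theorem stmt12 (n : ℕ) (hn : 1 ≤ n) (X : ℝ) (hX : 1 < X) (s : ℂ) (hs : 0 < s.re) :
    (1 - (1 - 1 / s) ^ n) -
        ∫ x in Set.Ioi (-Real.log X), (LiFtr n x : ℂ) * Complex.exp ((s - 1 / 2) * x) =
      (X : ℂ) ^ (-s) * ∑ j ∈ Finset.Icc 1 n, (n.choose j : ℂ) * (-1) ^ (j - 1) *
        ∑ m ∈ Finset.range j,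
          ((Real.log X : ℂ) ^ (j - m - 1) / (Nat.factorial (j - m - 1) : ℂ)) *
            (s ^ (m + 1))⁻¹ := by
  have hs0 : s ≠ 0 := fun h => by simp [h] at hs
  have hX0 : (0:ℝ) < X := lt_trans one_pos hX
  set a : ℝ := -Real.log X with ha_def
  have hlog : 0 < Real.log X := Real.log_pos hX
  have ha : a < 0 := by simp only [ha_def]; linarith
  -- the function inside the integral agrees on Ioo a 0 with a nice sum
  have hg : ∀ x ∈ Set.Ioo a 0, (LiFtr n x : ℂ) * Complex.exp ((s - 1/2) * x)
      = ∑ j ∈ Finset.Icc 1 n, (n.choose j : ℂ)/((Nat.factorial (j-1)):ℂ)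
          * ((x:ℂ)^(j-1) * Complex.exp (s*x)) := by
    intro x hx
    have hx0 : x < 0 := hx.2
    have hexp2 : Complex.exp ((x:ℂ)/2) * Complex.exp ((s - 1/2) * x) = Complex.exp (s * x) := by
      rw [← Complex.exp_add]
      congr 1
      ring
    rw [LiFtr, if_pos hx0]
    push_cast
    rw [mul_comm (Complex.exp ((x:ℂ)/2)) _, mul_assoc, hexp2, Finset.sum_mul]
    exact Finset.sum_congr rfl fun j _ => by ring
  -- compute the integral
  have hint : (∫ x in Set.Ioi a, (LiFtr n x : ℂ) * Complex.exp ((s - 1/2) * x))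
      = ∑ j ∈ Finset.Icc 1 n, (n.choose j : ℂ)/((Nat.factorial (j-1)):ℂ)
          * (Pa s (j-1) 0 - Complex.exp (s*a) * Pa s (j-1) a) := by
    have h1 : (∫ x in Set.Ioi a, (LiFtr n x : ℂ) * Complex.exp ((s - 1/2) * x))
        = ∫ x in Set.Ioi a, Set.indicator (Set.Ioo a 0)
            (fun x : ℝ => ∑ j ∈ Finset.Icc 1 n, (n.choose j : ℂ)/((Nat.factorial (j-1)):ℂ)
              * ((x:ℂ)^(j-1) * Complex.exp (s*x))) x := by
      apply MeasureTheory.setIntegral_congr_fun measurableSet_Ioi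
      intro x hx
      by_cases hx0 : x < 0
      · have hmem : x ∈ Set.Ioo a 0 := ⟨hx, hx0⟩
        rw [Set.indicator_of_mem hmem]
        exact hg x hmem
      · have hnm : x ∉ Set.Ioo a 0 := fun h => hx0 h.2
        rw [Set.indicator_of_notMem hnm]
        simp [LiFtr, hx0]
    rw [h1, MeasureTheory.setIntegral_indicator measurableSet_Ioo]
    have h2 : Set.Ioi a ∩ Set.Ioo a 0 = Set.Ioo a 0 :=
      Set.inter_eq_self_of_subset_right fun x hx => hx.1
    rw [h2, MeasureTheory.integral_finset_sum]
    · refine Finset.sum_congr rfl fun j _ => ?_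
      rw [MeasureTheory.integral_const_mul, integral_Ioo_pow_exp s hs0 (j-1) a ha.le]
    · intro j _
      exact (((continuous_const.mul (cont_pow_exp s (j-1)))).integrableOn_Ioc.mono_set
        Set.Ioo_subset_Ioc_self)
  rw [hint]
  -- X^{-s} = exp (s * a)
  have hXs : (X : ℂ) ^ (-s) = Complex.exp (s * a) := by
    rw [Complex.cpow_def_of_ne_zero (by exact_mod_cast hX0.ne' : (X:ℂ) ≠ 0)]
    rw [← Complex.ofReal_log hX0.le]
    congr 1
    simp only [ha_def]
    push_cast
    ring
  rw [hXs]
  -- binomial expansion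
  have hbin : (1 - (1 - 1/s)^n)
      = ∑ j ∈ Finset.Icc 1 n, (n.choose j : ℂ)/((Nat.factorial (j-1)):ℂ) * Pa s (j-1) 0 := by
    have hb : (1 - 1/s)^n = ∑ k ∈ Finset.range (n+1), (-(1/s))^k * 1^(n-k) * (n.choose k : ℂ) := by
      rw [← add_pow]
      ring_nf
    rw [hb, Finset.sum_range_succ']
    rw [sum_Icc_one]
    have hterm : ∀ i ∈ Finset.range n,
        (n.choose (i+1) : ℂ)/((Nat.factorial (i+1-1)):ℂ) * Pa s (i+1-1) 0
        = -((-(1/s))^(i+1) * 1^(n-(i+1)) * (n.choose (i+1) : ℂ)) := by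
      intro i _
      simp only [Nat.add_sub_cancel]
      rw [Pa_zero]
      have hfne : ((Nat.factorial i : ℂ)) ≠ 0 := by exact_mod_cast Nat.factorial_ne_zero i
      rw [one_pow]
      field_simp
      have h : s * s ^ i * s⁻¹ * s⁻¹ ^ i = 1 := by
        rw [inv_pow, mul_right_comm s, mul_inv_cancel₀ hs0, one_mul, mul_inv_cancel₀ (pow_ne_zero _ hs0)]
      linear_combination (-((n.choose (i + 1) : ℂ) * (-1)^i)) * h
    rw [Finset.sum_congr rfl hterm, Finset.sum_neg_distrib]
    simp
  rw [hbin, ← Finset.sum_sub_distrib]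
  have h3 : ∀ j ∈ Finset.Icc 1 n,
      (n.choose j : ℂ)/((Nat.factorial (j-1)):ℂ) * Pa s (j-1) 0
        - (n.choose j : ℂ)/((Nat.factorial (j-1)):ℂ)
            * (Pa s (j-1) 0 - Complex.exp (s*a) * Pa s (j-1) a)
      = Complex.exp (s*a) * ((n.choose j : ℂ) * (-1)^(j-1) *
          ∑ m ∈ Finset.range j, ((Real.log X : ℂ)^(j-m-1) / (Nat.factorial (j-m-1) : ℂ))
            * (s^(m+1))⁻¹) := by
    intro j hj
    have hj1 : 1 ≤ j := (Finset.mem_Icc.mp hj).1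
    obtain ⟨k, rfl⟩ : ∃ k, j = k + 1 := ⟨j - 1, by omega⟩
    simp only [Nat.add_sub_cancel]
    have hsum : (n.choose (k+1) : ℂ)/((Nat.factorial k):ℂ) * Pa s k 0
        - (n.choose (k+1) : ℂ)/((Nat.factorial k):ℂ)
            * (Pa s k 0 - Complex.exp (s*a) * Pa s k a)
        = Complex.exp (s*a) * ((n.choose (k+1) : ℂ)/((Nat.factorial k):ℂ) * Pa s k a) := by
      ring
    rw [hsum]
    congr 1
    unfold Pa
    rw [Finset.mul_sum, Finset.mul_sum]
    refine Finset.sum_congr rfl fun m hm => ?_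
    have hmk : m ≤ k := Nat.lt_succ_iff.mp (Finset.mem_range.mp hm)
    have hkm : k + 1 - m - 1 = k - m := by omega
    rw [hkm]
    have hca : ((a:ℝ):ℂ) = -((Real.log X : ℂ)) := by
      simp only [ha_def]; push_cast; ring
    rw [hca, neg_pow]
    have hsign : (-1:ℂ)^m * (-1:ℂ)^(k-m) = (-1:ℂ)^k := by
      rw [← pow_add]
      congr 1
      omega
    have hfk : ((Nat.factorial k : ℂ)) ≠ 0 := by exact_mod_cast Nat.factorial_ne_zero k
    have hfkm : ((Nat.factorial (k-m) : ℂ)) ≠ 0 := by exact_mod_cast Nat.factorial_ne_zero (k-m)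
    have hsp : (s:ℂ)^(m+1) ≠ 0 := pow_ne_zero _ hs0
    field_simp
    rw [← hsign]
    ring
  rw [Finset.sum_congr rfl h3, ← Finset.mul_sum]
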